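/- Necessity of the conditions on the cyclic inequalities: let n ≥ 2 and let a, b be integers with 0 ≤ a ≤ n and 0 ≤ b ≤ n. If the inequality C_n(a) − C_n(b) ≥ S*({1,…,n}) holds for the discrete entropies of every graph model on n regions, then a > b and a + b ≤ n. -/

import Mathlib

open Classical

/-- A *graph model* on `n` regions: a finite graph with symmetric nonnegative edge
weights `w` (weight `0` meaning "no edge") and a partial coloring of the vertices by
the `n+1` boundary colors; `color v = none` means `v` is a bulk vertex, color
`Fin.castSucc i` represents boundary region `i ∈ {1,…,n}` and color `Fin.last n`
represents the purifying region `n+1`. -/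
structure GraphModel (n : ℕ) where
  V : Type
  [fintypeV : Fintype V]
  w : V → V → ℝ
  symm : ∀ u v, w u v = w v u
  nonneg : ∀ u v, 0 ≤ w u v
  color : V → Option (Fin (n + 1))

attribute [instance] GraphModel.fintypeV

/-- `|C(W)|`: the total weight of the edges with exactly one endpoint in `W`
(each unordered crossing edge `{u,v}` is counted exactly once, via its ordering
with `u ∈ W` and `v ∉ W`). -/
noncomputable def GraphModel.cutWeight {n : ℕ} (G : GraphModel n) (W : Set G.V) : ℝ :=
  ∑ u : G.V, ∑ v : G.V, if u ∈ W ∧ v ∉ W then G.w u v else 0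

/-- `W` is an `I`-cut: `W` contains precisely the boundary vertices whose color lies
in `I ⊆ {1,…,n}`. -/
def GraphModel.IsCut {n : ℕ} (G : GraphModel n) (I : Finset (Fin n)) (W : Set G.V) : Prop :=
  ∀ v c, G.color v = some c → (v ∈ W ↔ ∃ i ∈ I, Fin.castSucc i = c)

/-- The discrete entropy `S*(I)`: the minimal weight of an `I`-cut. -/
noncomputable def GraphModel.entropy {n : ℕ} (G : GraphModel n) (I : Finset (Fin n)) : ℝ :=
  sInf (G.cutWeight '' {W | G.IsCut I W})

/-- The holographic entropy vector of a graph model: the collection of all discrete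
entropies `S*(I)` of nonempty subsets `I ⊆ {1,…,n}`. -/
noncomputable def GraphModel.entropyVector {n : ℕ} (G : GraphModel n)
    (I : {I : Finset (Fin n) // I.Nonempty}) : ℝ :=
  G.entropy I.1

/-- The cyclic window of `a` consecutive regions starting at `i` (indices mod `n`);
summing over all `i` this gives the windows `{i+1,…,i+a}` of the paper. -/
noncomputable def cycWindow (n i a : ℕ) : Finset (Fin n) :=
  Finset.univ.filter fun j => ∃ t < a, (i + t) % n = (j : ℕ)

/-- `C_n(a) = Σ_{i=1}^n S({i+1,…,i+a})`: the cyclic sum of the entropies of all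
windows of `a` consecutive regions. -/
noncomputable def cycC {n : ℕ} (S : Finset (Fin n) → ℝ) (a : ℕ) : ℝ :=
  ∑ i ∈ Finset.range n, S (cycWindow n i a)

lemma cycWindow_card (n i a : ℕ) (h0 : 0 < n) (ha : a ≤ n) :
    (cycWindow n i a).card = a := by
  have : cycWindow n i a =
      (Finset.range a).image (fun t => (⟨(i + t) % n, Nat.mod_lt _ h0⟩ : Fin n)) := by
    ext j
    simp only [cycWindow, Finset.mem_filter, Finset.mem_univ, true_and, Finset.mem_image,
      Finset.mem_range]
    constructor
    · rintro ⟨t, ht, hte⟩; exact ⟨t, ht, Fin.ext hte⟩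
    · rintro ⟨t, ht, rfl⟩; exact ⟨t, ht, rfl⟩
  rw [this, Finset.card_image_of_injOn, Finset.card_range]
  intro t ht s hs hts
  simp only [Finset.coe_range, Set.mem_Iio] at ht hs
  have : (i + t) % n = (i + s) % n := congrArg Fin.val hts
  have h2 : t % n = s % n := Nat.ModEq.add_left_cancel' i this
  rwa [Nat.mod_eq_of_lt (lt_of_lt_of_le ht ha), Nat.mod_eq_of_lt (lt_of_lt_of_le hs ha)] at h2

lemma zero_window_count (n a : ℕ) (h0 : 0 < n) (ha : a ≤ n) :
    ((Finset.range n).filter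
      (fun i => (⟨0, h0⟩ : Fin n) ∈ cycWindow n i a)).card = a := by
  have : (Finset.range n).filter (fun i => (⟨0, h0⟩ : Fin n) ∈ cycWindow n i a)
      = (Finset.range a).image (fun t => (n - t) % n) := by
    ext i
    simp only [Finset.mem_filter, Finset.mem_range, cycWindow, Finset.mem_univ, true_and,
      Finset.mem_image]
    constructor
    · rintro ⟨hi, t, ht, hte⟩
      refine ⟨t, ht, ?_⟩
      have htn : t < n := lt_of_lt_of_le ht ha
      have : n ∣ i + t := Nat.dvd_of_mod_eq_zero hte
      rcases this with ⟨k, hk⟩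
      rcases k with _ | _ | k
      rotate_left 2
      · exfalso
        have hk' : i + t = n * k + n + n := by rw [hk]; ring
        have : 0 ≤ n * k := Nat.zero_le _
        omega
      · have : i = 0 ∧ t = 0 := by omega
        rw [this.1, this.2]
        simp
      · have hi : i = n - t := by omega
        have htp : 0 < t := by omega
        rw [hi, Nat.mod_eq_of_lt (by omega)]
    · rintro ⟨t, ht, rfl⟩
      have htn : t < n := lt_of_lt_of_le ht ha
      refine ⟨Nat.mod_lt _ h0, t, ht, ?_⟩
      rcases Nat.eq_zero_or_pos t with rfl | htp
      · simp
      · have h1 : (n - t) % n = n - t := Nat.mod_eq_of_lt (by omega)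
        have h2 : n - t + t = n := by omega
        rw [h1, h2, Nat.mod_self]
  rw [this, Finset.card_image_of_injOn, Finset.card_range]
  intro t ht s hs hts
  simp only [Finset.coe_range, Set.mem_Iio] at ht hs
  dsimp only at hts
  have htn : t < n := lt_of_lt_of_le ht ha
  have hsn : s < n := lt_of_lt_of_le hs ha
  rcases Nat.eq_zero_or_pos t with rfl | htp <;> rcases Nat.eq_zero_or_pos s with rfl | hsp
  · rfl
  · simp [Nat.mod_self] at hts
    rw [Nat.mod_eq_of_lt (by omega)] at hts
    omega
  · simp [Nat.mod_self] at hts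
    rw [Nat.mod_eq_of_lt (by omega)] at hts
    omega
  · rw [Nat.mod_eq_of_lt (by omega), Nat.mod_eq_of_lt (by omega)] at hts
    omega

/-- Model 1: one vertex of region `0`, one purifier vertex, edge of weight 1. -/
@[reducible] noncomputable def G1 (n : ℕ) (h0 : 0 < n) : GraphModel n where
  V := Bool
  w u v := if u = v then 0 else 1
  symm u v := by rcases u <;> rcases v <;> simp
  nonneg u v := by split <;> norm_num
  color v := if v then some (Fin.castSucc ⟨0, h0⟩) else some (Fin.last n)

lemma G1_cuts (n : ℕ) (h0 : 0 < n) (I : Finset (Fin n)) :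
    {W : Set (G1 n h0).V | (G1 n h0).IsCut I W} =
      {{x : (G1 n h0).V | x = true ∧ (⟨0, h0⟩ : Fin n) ∈ I}} := by
  have ctrue : (G1 n h0).color true = some (Fin.castSucc ⟨0, h0⟩) := by simp [G1]
  have cfalse : (G1 n h0).color false = some (Fin.last n) := by simp [G1]
  ext W
  simp only [Set.mem_setOf_eq, Set.mem_singleton_iff, GraphModel.IsCut]
  constructor
  · intro hW
    have ht := hW true _ ctrue
    have hf := hW false _ cfalse
    ext x
    rcases x
    · rw [Set.mem_setOf_eq, hf]
      constructor
      · rintro ⟨i, -, hlast⟩; exact absurd hlast (Fin.castSucc_lt_last i).ne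
      · rintro ⟨hx, -⟩; exact absurd hx (by simp)
    · rw [Set.mem_setOf_eq, ht]
      constructor
      · rintro ⟨i, hi, hc2⟩; exact ⟨rfl, by rwa [Fin.castSucc_inj.mp hc2] at hi⟩
      · rintro ⟨-, hi⟩; exact ⟨_, hi, rfl⟩
  · rintro rfl
    intro v c hc
    rcases v
    · rw [if_neg (by decide), Option.some_inj] at hc
      subst hc
      rw [Set.mem_setOf_eq]
      constructor
      · rintro ⟨hx, -⟩; exact absurd hx (by simp)
      · rintro ⟨i, -, hlast⟩; exact absurd hlast (Fin.castSucc_lt_last i).ne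
    · rw [if_pos rfl, Option.some_inj] at hc
      subst hc
      rw [Set.mem_setOf_eq]
      constructor
      · rintro ⟨-, hi⟩; exact ⟨_, hi, rfl⟩
      · rintro ⟨i, hi, hc2⟩; exact ⟨rfl, by rwa [Fin.castSucc_inj.mp hc2] at hi⟩

lemma G1_entropy (n : ℕ) (h0 : 0 < n) (I : Finset (Fin n)) :
    (G1 n h0).entropy I = if (⟨0, h0⟩ : Fin n) ∈ I then 1 else 0 := by
  unfold GraphModel.entropy
  rw [G1_cuts, Set.image_singleton, csInf_singleton]
  unfold GraphModel.cutWeight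
  show (∑ u : Bool, ∑ v : Bool, _) = _
  rw [Fintype.sum_bool]
  rw [Fintype.sum_bool, Fintype.sum_bool]
  by_cases hI : (⟨0, h0⟩ : Fin n) ∈ I <;>
    simp [G1, hI]

/-- Model 2: a bulk vertex connected to one vertex of each region, weights 1. -/
@[reducible] noncomputable def G2 (n : ℕ) : GraphModel n where
  V := Option (Fin n)
  w u v := if u.isSome = v.isSome then 0 else 1
  symm u v := by rcases u <;> rcases v <;> simp
  nonneg u v := by split <;> norm_num
  color v := v.map Fin.castSucc

lemma G2_isCut_iff (n : ℕ) (I : Finset (Fin n)) (W : Set (G2 n).V) :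
    (G2 n).IsCut I W ↔ ∀ i : Fin n, some i ∈ W ↔ i ∈ I := by
  constructor
  · intro hW i
    have := hW (some i) (Fin.castSucc i) (by simp [G2])
    rw [this]
    constructor
    · rintro ⟨j, hj, hc⟩; rwa [Fin.castSucc_inj.mp hc] at hj
    · intro hi; exact ⟨_, hi, rfl⟩
  · intro hW v c hc
    rcases v with _ | i
    · simp [G2] at hc
    · have : Fin.castSucc i = c := by simpa [G2] using hc
      subst this
      rw [hW i]
      constructor
      · intro hi; exact ⟨_, hi, rfl⟩
      · rintro ⟨j, hj, hc2⟩; rwa [Fin.castSucc_inj.mp hc2] at hj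

lemma G2_cutWeight (n : ℕ) (I : Finset (Fin n)) (W : Set (G2 n).V)
    (hW : ∀ i : Fin n, some i ∈ W ↔ i ∈ I) :
    (G2 n).cutWeight W = if (none : Option (Fin n)) ∈ W then ((n : ℝ) - I.card) else I.card := by
  have hIcard : ∑ i : Fin n, (if i ∈ I then (1 : ℝ) else 0) = I.card := by
    rw [Finset.sum_ite_mem, Finset.univ_inter, Finset.sum_const, nsmul_eq_mul, mul_one]
  have hIcard' : ∑ i : Fin n, (if i ∈ I then (0 : ℝ) else 1) = (n : ℝ) - I.card := by
    have : ∀ j : Fin n, (if j ∈ I then (0:ℝ) else 1) = 1 - (if j ∈ I then (1:ℝ) else 0) := by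
      intro j; by_cases hj : j ∈ I <;> simp [hj]
    rw [Finset.sum_congr rfl (fun j _ => this j), Finset.sum_sub_distrib, hIcard,
      Finset.sum_const, Finset.card_univ, Fintype.card_fin, nsmul_eq_mul, mul_one]
  unfold GraphModel.cutWeight
  show (∑ u : Option (Fin n), ∑ v : Option (Fin n), _) = _
  simp only [Fintype.sum_option, G2, Option.isSome_some, Option.isSome_none, if_true,
    Bool.true_eq_false, Bool.false_eq_true, if_false, hW]
  by_cases hnW : (none : Option (Fin n)) ∈ W
  · simp only [hnW, not_true, and_false, false_and, if_false, if_true, true_and, and_true,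
      Finset.sum_const_zero, add_zero, zero_add, not_not, ite_self, ite_not]
    exact hIcard' 
  · simp only [hnW, not_false_iff, and_true, false_and, and_false, if_false, if_true,
      Finset.sum_const_zero, add_zero, zero_add, ite_self]
    exact hIcard
lemma G2_entropy (n : ℕ) (I : Finset (Fin n)) :
    (G2 n).entropy I = min (I.card : ℝ) ((n : ℝ) - I.card) := by
  set W1 : Set (G2 n).V := {v | ∃ i ∈ I, v = some i} with hW1def
  have hW1 : ∀ i : Fin n, some i ∈ W1 ↔ i ∈ I := by
    intro i
    simp only [hW1def, Set.mem_setOf_eq]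
    constructor
    · rintro ⟨j, hj, hji⟩; rw [Option.some_inj] at hji; rwa [hji]
    · intro hi; exact ⟨i, hi, rfl⟩
  have hW1n : (none : Option (Fin n)) ∉ W1 := by
    rintro ⟨j, -, hj⟩; cases hj
  set W2 : Set (G2 n).V := insert none W1 with hW2def
  have hW2 : ∀ i : Fin n, some i ∈ W2 ↔ i ∈ I := by
    intro i
    rw [hW2def, Set.mem_insert_iff]
    simp only [reduceCtorEq, false_or]
    exact hW1 i
  have hW2n : (none : Option (Fin n)) ∈ W2 := Set.mem_insert _ _
  have hc1 : (G2 n).IsCut I W1 := (G2_isCut_iff n I W1).mpr hW1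
  have hc2 : (G2 n).IsCut I W2 := (G2_isCut_iff n I W2).mpr hW2
  have hv1 : (G2 n).cutWeight W1 = I.card := by rw [G2_cutWeight n I W1 hW1, if_neg hW1n]
  have hv2 : (G2 n).cutWeight W2 = (n : ℝ) - I.card := by
    rw [G2_cutWeight n I W2 hW2, if_pos hW2n]
  have hlb : ∀ x ∈ (G2 n).cutWeight '' {W | (G2 n).IsCut I W},
      min (I.card : ℝ) ((n : ℝ) - I.card) ≤ x := by
    rintro x ⟨W, hW, rfl⟩
    rw [G2_cutWeight n I W ((G2_isCut_iff n I W).mp hW)]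
    split
    · exact min_le_right _ _
    · exact min_le_left _ _
  apply le_antisymm
  · rcases min_cases (I.card : ℝ) ((n : ℝ) - I.card) with ⟨hm, -⟩ | ⟨hm, -⟩
    · rw [hm, ← hv1]
      exact csInf_le ⟨_, hlb⟩ ⟨W1, hc1, rfl⟩
    · rw [hm, ← hv2]
      exact csInf_le ⟨_, hlb⟩ ⟨W2, hc2, rfl⟩
  · exact le_csInf ⟨_, ⟨W1, hc1, rfl⟩⟩ hlb

/-- Necessity of the conditions on the cyclic inequalities: if
`C_n(a) − C_n(b) ≥ S*({1,…,n})` holds for every graph model on `n` regions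
(`n ≥ 2`, `0 ≤ a, b ≤ n`), then `a > b` and `a + b ≤ n`. -/
theorem stmt13 (n : ℕ) (hn : 2 ≤ n) (a b : ℕ) (ha : a ≤ n) (hb : b ≤ n)
    (h : ∀ G : GraphModel n,
      cycC G.entropy a - cycC G.entropy b ≥ G.entropy Finset.univ) :
    b < a ∧ a + b ≤ n := by
  have h0 : 0 < n := by omega
  have e1 := h (G1 n h0)
  have cyc1 : ∀ m : ℕ, m ≤ n → cycC (G1 n h0).entropy m = m := by
    intro m hm
    unfold cycC
    rw [Finset.sum_congr rfl (fun i _ => G1_entropy n h0 (cycWindow n i m))]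
    rw [Finset.sum_ite, Finset.sum_const, Finset.sum_const_zero, add_zero, nsmul_eq_mul, mul_one,
      zero_window_count n m h0 hm]
  have eu1 : (G1 n h0).entropy Finset.univ = 1 := by
    rw [G1_entropy, if_pos (Finset.mem_univ _)]
  rw [cyc1 a ha, cyc1 b hb, eu1] at e1
  have hba : b + 1 ≤ a := by
    have : (b : ℝ) + 1 ≤ (a : ℝ) := by linarith
    exact_mod_cast this
  refine ⟨by omega, ?_⟩
  have e2 := h (G2 n)
  have cyc2 : ∀ m : ℕ, m ≤ n → cycC (G2 n).entropy m = n * min (m : ℝ) ((n : ℝ) - m) := by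
    intro m hm
    unfold cycC
    rw [Finset.sum_congr rfl (fun i _ => by
      rw [G2_entropy, cycWindow_card n i m h0 hm])]
    rw [Finset.sum_const, Finset.card_range, nsmul_eq_mul]
  have eu2 : (G2 n).entropy Finset.univ = 0 := by
    rw [G2_entropy, Finset.card_univ, Fintype.card_fin]
    simp
  rw [cyc2 a ha, cyc2 b hb, eu2] at e2
  have hnpos : (0 : ℝ) < n := by exact_mod_cast h0
  have hmin : min (b : ℝ) ((n : ℝ) - b) ≤ min (a : ℝ) ((n : ℝ) - a) := by
    have := (mul_le_mul_iff_right₀ hnpos).mp (by linarith :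
      (n : ℝ) * min (b : ℝ) ((n : ℝ) - b) ≤ (n : ℝ) * min (a : ℝ) ((n : ℝ) - a))
    exact this
  have hminN : min b (n - b) ≤ min a (n - a) := by
    have hc : ((min b (n - b) : ℕ) : ℝ) ≤ ((min a (n - a) : ℕ) : ℝ) := by
      push_cast [Nat.cast_min, Nat.cast_sub ha, Nat.cast_sub hb]
      exact hmin
    exact_mod_cast hc
  omega
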